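/- Let R be a Noetherian ring of prime characteristic p and let I ⊆ R be an ideal. Then the tight closure of I is contained in the integral closure of I. -/

import Mathlib

/-- The `q`-th Frobenius power of an ideal: the ideal generated by `q`-th powers of elements. -/
def frobPow {R : Type*} [CommRing R] (I : Ideal R) (q : ℕ) : Ideal R :=
  Ideal.span ((fun a => a ^ q) '' (I : Set R))

/-- `R°`: the complement of the union of the minimal primes of `R`. -/
def Rzero (R : Type*) [CommRing R] : Set R :=
  {c | ∀ P ∈ minimalPrimes R, c ∉ P}

/-- The tight closure of an ideal, as a set. -/
def tightCl {R : Type*} [CommRing R] (p : ℕ) (I : Ideal R) : Set R :=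
  {x | ∃ c ∈ Rzero R, ∃ e₀ : ℕ, ∀ e, e₀ ≤ e → c * x ^ p ^ e ∈ frobPow I (p ^ e)}


open Polynomial

section Good
variable {R : Type*} [CommRing R]

/-- auxiliary predicate: monic-of-degree-`n` polynomial witnessing integral dependence on `I`. -/
def GoodPoly (I : Ideal R) (n : ℕ) (f : R[X]) : Prop :=
  f.coeff n = 1 ∧ (∀ j, n < j → f.coeff j = 0) ∧ ∀ j ≤ n, f.coeff j ∈ I ^ (n - j)

lemma GoodPoly.mul {I : Ideal R} {n m : ℕ} {f g : R[X]} (hf : GoodPoly I n f)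
    (hg : GoodPoly I m g) : GoodPoly I (n + m) (f * g) := by
  obtain ⟨hf1, hf0, hfI⟩ := hf
  obtain ⟨hg1, hg0, hgI⟩ := hg
  have hvan : ∀ i j : ℕ, n + m < i + j → f.coeff i * g.coeff j = 0 := by
    intro i j hij
    rcases lt_or_ge n i with h | h
    · rw [hf0 i h, zero_mul]
    · rw [hg0 j (by omega), mul_zero]
  refine ⟨?_, ?_, ?_⟩
  · rw [coeff_mul]
    rw [Finset.sum_eq_single (n, m)]
    · rw [hf1, hg1, one_mul]
    · rintro ⟨i, j⟩ hij hne
      rw [Finset.HasAntidiagonal.mem_antidiagonal] at hij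
      rcases lt_or_ge n i with h | h
      · rw [hf0 i h, zero_mul]
      · rcases eq_or_lt_of_le h with h' | h'
        · exact absurd (by simp [← h']; omega : (i, j) = (n, m)) hne
        · rw [hg0 j (by omega), mul_zero]
    · intro h
      exact absurd (Finset.HasAntidiagonal.mem_antidiagonal.mpr (by ring)) h
  · intro j hj
    rw [coeff_mul]
    refine Finset.sum_eq_zero ?_
    rintro ⟨i, k⟩ hik
    rw [Finset.HasAntidiagonal.mem_antidiagonal] at hik
    exact hvan i k (by omega)
  · intro k hk
    rw [coeff_mul]
    refine Ideal.sum_mem _ ?_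
    rintro ⟨i, j⟩ hij
    rw [Finset.HasAntidiagonal.mem_antidiagonal] at hij
    rcases lt_or_ge n i with h | h
    · rw [hf0 i h, zero_mul]; exact Ideal.zero_mem _
    · rcases lt_or_ge m j with h' | h'
      · rw [hg0 j h', mul_zero]; exact Ideal.zero_mem _
      · have : (n + m) - k = (n - i) + (m - j) := by omega
        rw [this, pow_add]
        exact Ideal.mul_mem_mul (hfI i h) (hgI j h')

lemma GoodPoly.pow {I : Ideal R} {n : ℕ} {f : R[X]} (hf : GoodPoly I n f) (k : ℕ) :
    GoodPoly I (n * (k + 1)) (f ^ (k + 1)) := by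
  induction k with
  | zero => simpa using hf
  | succ k ih =>
      have h2 := ih.mul hf
      rw [← pow_succ] at h2
      have : n * (k + 1 + 1) = n * (k + 1) + n := by ring
      rw [this]
      exact h2

lemma goodPoly_root {R : Type*} [CommRing R] {I : Ideal R} {n : ℕ} {f : R[X]} {x : R}
    (hn : 0 < n) (hf : GoodPoly I n f) (hx : f.eval x = 0) :
    ∃ n' : ℕ, 0 < n' ∧ ∃ a : ℕ → R,
      (∀ i ∈ Finset.Icc 1 n', a i ∈ I ^ i) ∧
      x ^ n' + ∑ i ∈ Finset.Icc 1 n', a i * x ^ (n' - i) = 0 := by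
  obtain ⟨hf1, hf0, hfI⟩ := hf
  refine ⟨n, hn, fun i => f.coeff (n - i), ?_, ?_⟩
  · intro i hi
    rw [Finset.mem_Icc] at hi
    have : n - (n - i) = i := by omega
    have h := hfI (n - i) (by omega)
    rwa [this] at h
  · have hdeg : f.natDegree < n + 1 := by
      have : f.natDegree ≤ n := natDegree_le_iff_coeff_eq_zero.mpr (fun N hN => hf0 N hN)
      omega
    have heval : f.eval x = ∑ j ∈ Finset.range (n + 1), f.coeff j * x ^ j :=
      eval_eq_sum_range' hdeg x
    rw [Finset.sum_range_succ, hf1, one_mul] at heval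
    have hre : ∑ j ∈ Finset.range n, f.coeff j * x ^ j
        = ∑ i ∈ Finset.Icc 1 n, f.coeff (n - i) * x ^ (n - i) := by
      refine Finset.sum_nbij' (fun j => n - j) (fun i => n - i) ?_ ?_ ?_ ?_ ?_
      · intro j hj; rw [Finset.mem_range] at hj; simp only [Finset.mem_Icc]; omega
      · intro i hi; rw [Finset.mem_Icc] at hi; simp only [Finset.mem_range]; omega
      · intro j hj; rw [Finset.mem_range] at hj; omega
      · intro i hi; rw [Finset.mem_Icc] at hi; omega
      · intro j hj; rw [Finset.mem_range] at hj
        have h1 : n - (n - j) = j := by omega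
        simp only [h1]
    rw [← hre, ← hx, heval]
    ring

end Good
lemma frobPow_le_pow {R : Type*} [CommRing R] (I : Ideal R) (q : ℕ) :
    frobPow I q ≤ I ^ q := by
  rw [frobPow, Ideal.span_le]
  rintro _ ⟨a, ha, rfl⟩
  exact Ideal.pow_mem_pow ha q

section Main
variable {R : Type*} [CommRing R] [IsNoetherianRing R]

theorem key_equation (p : ℕ) (hp : p.Prime) (I : Ideal R) (c x : R) (e₀ : ℕ)
    (h : ∀ e, e₀ ≤ e → c * x ^ p ^ e ∈ I ^ (p ^ e)) :
    ∃ (Q : ℕ) (k₀ : ℕ) (q : Fin k₀ → ℕ) (d : Fin k₀ → R),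
      0 < Q ∧ (∀ i, q i < Q) ∧ (∀ i, d i ∈ I ^ (Q - q i)) ∧
      c * x ^ Q = ∑ i, d i * (c * x ^ q i) := by
  classical
  set A := reesAlgebra I with hA
  set q : ℕ → ℕ := fun i => p ^ (e₀ + i) with hq
  set G : ℕ → R[X] := fun i => C (c * x ^ q i) * X ^ q i with hG
  have hGmem : ∀ i, G i ∈ A := by
    intro i j
    simp only [hG, coeff_C_mul, coeff_X_pow]
    split_ifs with hj
    · subst hj
      simpa using h (e₀ + i) (Nat.le_add_right _ _)
    · simp
  set g : ℕ → A := fun i => ⟨G i, hGmem i⟩ with hg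
  set J : ℕ →o Ideal A :=
    ⟨fun k => Ideal.span (Set.range fun i : Fin k => g i), by
      intro k l hkl
      apply Ideal.span_mono
      rintro _ ⟨i, rfl⟩
      exact ⟨⟨i, lt_of_lt_of_le i.2 hkl⟩, rfl⟩⟩ with hJ
  obtain ⟨k₀, hk₀⟩ := monotone_stabilizes_iff_noetherian.mpr
    (inferInstance : IsNoetherian A A) J
  have hmem : g k₀ ∈ J k₀ := by
    rw [hk₀ (k₀ + 1) (Nat.le_succ _)]
    exact Ideal.subset_span ⟨⟨k₀, Nat.lt_succ_self _⟩, rfl⟩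
  rw [hJ] at hmem
  change g k₀ ∈ Ideal.span (Set.range fun i : Fin k₀ => g i) at hmem
  rw [Ideal.mem_span_range_iff_exists_fun] at hmem
  obtain ⟨w, hw⟩ := hmem
  have hval : (∑ i : Fin k₀, (w i : R[X]) * G i) = G k₀ := by
    have h2 := congrArg ((reesAlgebra I).val) hw
    simpa [map_sum] using h2
  set Q : ℕ := q k₀ with hQ
  have hqlt : ∀ i : Fin k₀, q i < Q := by
    intro i
    exact Nat.pow_lt_pow_right hp.one_lt (by omega)
  set d : Fin k₀ → R := fun i => (w i : R[X]).coeff (Q - q i) with hd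
  have hkey : c * x ^ Q = ∑ i, d i * (c * x ^ q i) := by
    have hco := congrArg (fun f : R[X] => f.coeff Q) hval
    change (∑ i : Fin k₀, (w i : R[X]) * G i).coeff Q = (G k₀).coeff Q at hco
    rw [finset_sum_coeff] at hco
    have hterm : ∀ i : Fin k₀,
        ((w i : R[X]) * G i).coeff Q = d i * (c * x ^ q i) := by
      intro i
      have : (w i : R[X]) * G i = ((w i : R[X]) * C (c * x ^ q i)) * X ^ q i := by
        rw [hG]; ring
      rw [this, coeff_mul_X_pow', if_pos (hqlt i).le, coeff_mul_C]
    have hrhs : (G k₀).coeff Q = c * x ^ Q := by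
      show (C (c * x ^ q k₀) * X ^ q k₀).coeff (q k₀) = _
      rw [coeff_C_mul, coeff_X_pow, if_pos rfl, mul_one]
    rw [hrhs] at hco
    rw [← hco]
    exact Finset.sum_congr rfl fun i _ => hterm i
  refine ⟨Q, k₀, fun i => q i, d, ?_, hqlt, ?_, hkey⟩
  · exact Nat.pow_pos hp.pos
  · intro i
    exact (w i).2 (Q - q i)

end Main

/-- tight closure is contained in the integral closure of an ideal. -/
theorem stmt2 {R : Type*} [CommRing R] [IsNoetherianRing R] (p : ℕ) (hp : p.Prime)
    [CharP R p] (I : Ideal R) :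
    tightCl p I ⊆ {x : R | ∃ n : ℕ, 0 < n ∧ ∃ a : ℕ → R,
      (∀ i ∈ Finset.Icc 1 n, a i ∈ I ^ i) ∧
      x ^ n + ∑ i ∈ Finset.Icc 1 n, a i * x ^ (n - i) = 0} := by
  intro x hx
  obtain ⟨c, hc, e₀, hce⟩ := hx
  have h : ∀ e, e₀ ≤ e → c * x ^ p ^ e ∈ I ^ (p ^ e) :=
    fun e he => frobPow_le_pow I (p ^ e) (hce e he)
  obtain ⟨Q, k₀, q, d, hQpos, hqlt, hdI, hkey⟩ := key_equation p hp I c x e₀ h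
  classical
  set z : R := x ^ Q - ∑ i, d i * x ^ q i with hz
  have hcz : c * z = 0 := by
    have h1 : c * z = c * x ^ Q - ∑ i, d i * (c * x ^ q i) := by
      rw [hz, mul_sub, Finset.mul_sum]
      congr 1
      exact Finset.sum_congr rfl fun i _ => by ring
    rw [h1, hkey, sub_self]
  have hzP : ∀ P ∈ minimalPrimes R, z ∈ P := by
    intro P hP
    have hPp : Ideal.IsPrime P := hP.1.1
    have hmem : c * z ∈ P := by rw [hcz]; exact P.zero_mem
    rcases hPp.mem_or_mem hmem with hmem' | hmem'
    · exact absurd hmem' (hc P hP)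
    · exact hmem'
  have hznil : IsNilpotent z := by
    rw [← mem_nilradical, nilradical_eq_sInf]
    refine Submodule.mem_sInf.mpr ?_
    intro P hPprime
    haveI : Ideal.IsPrime (P : Ideal R) := hPprime
    obtain ⟨Pm, hPm, hle⟩ := Ideal.exists_minimalPrimes_le (bot_le : (⊥ : Ideal R) ≤ P)
    exact hle (hzP Pm hPm)
  obtain ⟨m, hm⟩ := hznil
  set f : Polynomial R := Polynomial.X ^ Q - ∑ i, Polynomial.C (d i) * Polynomial.X ^ (q i)
    with hf
  have hfcoeff : ∀ j, f.coeff j =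
      (if j = Q then 1 else 0) - ∑ i, (if j = q i then d i else 0) := by
    intro j
    simp [hf, Polynomial.coeff_sub, Polynomial.finset_sum_coeff, Polynomial.coeff_C_mul,
      Polynomial.coeff_X_pow]
  have hfgood : GoodPoly I Q f := by
    refine ⟨?_, ?_, ?_⟩
    · rw [hfcoeff, if_pos rfl, Finset.sum_eq_zero, sub_zero]
      intro i _
      exact if_neg (hqlt i).ne'
    · intro j hj
      rw [hfcoeff, if_neg (by omega), Finset.sum_eq_zero, sub_zero]
      intro i _
      exact if_neg (by have := hqlt i; omega)
    · intro j hj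
      rcases eq_or_lt_of_le hj with hj' | hj'
      · subst hj'
        rw [hfcoeff, if_pos rfl, Finset.sum_eq_zero, sub_zero]
        · simp
        · intro i _
          exact if_neg (hqlt i).ne'
      · rw [hfcoeff, if_neg (by omega), zero_sub]
        refine neg_mem (Ideal.sum_mem _ ?_)
        intro i _
        split_ifs with hij
        · rw [hij]
          exact hdI i
        · exact Ideal.zero_mem _
  have hfeval : f.eval x = z := by
    simp [hf, hz, Polynomial.eval_finset_sum]
  have hgood2 : GoodPoly I (Q * (m + 1)) (f ^ (m + 1)) := hfgood.pow m
  have heval2 : (f ^ (m + 1)).eval x = 0 := by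
    rw [Polynomial.eval_pow, hfeval, pow_succ, hm, zero_mul]
  exact goodPoly_root (by positivity) hgood2 heval2
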